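/- Let P be a partial order, ⊩ the forcing relation, and for each condition p and m ∈ ω let (p)_m be an operation with the properties: (p)_m ≥ p (i.e., p extends (p)_m), (p)_m is compatible with p, and ((q)_m for q ≤ (p)_{m+1}) is compatible with p. Suppose forcing satisfies: p ⊩ φ and q compatible with p implies q does not force ¬φ. If the induction hypothesis 'p ⊩ ψ implies (p)_m ⊩ ψ for all Π_m formulas ψ' holds, and p ⊩ φ for a Π_{m+1} formula φ = ∀x ψ with ψ Σ_m, then (p)_{m+1} ⊩ φ. -/
import Mathlib


/-- Compatibility in a partial order: a common extension exists. -/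
def PCompat {P : Type*} [PartialOrder P] (p q : P) : Prop := ∃ r, r ≤ p ∧ r ≤ q

/-- inductive step of the Claim in Lemma 5: abstract forcing
framework with a restriction operation `(·)_m`.  If `p` forces the `Π_{m+1}`
formula `φ = ∀x ψ` (`ψ` `Σ_m`), then `(p)_{m+1}` forces `φ`. -/
theorem restriction_forces_pi_succ {P Sent : Type*} [PartialOrder P]
    (Forces : P → Sent → Prop) (Pi : ℕ → Set Sent) (neg : Sent → Sent)
    (res : P → ℕ → P) (m : ℕ) (φ : Sent)
    -- `p` extends `(p)_k` (hence `(p)_k` is compatible with `p`)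
    (hres : ∀ (p : P) (k : ℕ), p ≤ res p k)
    -- for `q ≤ (p)_{m+1}`, `(q)_m` is compatible with `p`
    (hrescompat : ∀ p q : P, q ≤ res p (m+1) → PCompat (res q m) p)
    -- monotonicity of forcing
    (hmono : ∀ (p q : P) (χ : Sent), q ≤ p → Forces p χ → Forces q χ)
    -- if `p` forces `χ` then no condition compatible with `p` forces `¬χ`
    (hnegC : ∀ (p q : P) (χ : Sent), Forces p χ → PCompat p q → ¬ Forces q (neg χ))
    -- density/truth: if `r` does not force `χ`, some extension forces `¬χ`
    (hdense : ∀ (r : P) (χ : Sent), ¬ Forces r χ → ∃ q, q ≤ r ∧ Forces q (neg χ))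
    -- `Inst` is the set of `Π_m` instances `ψ(x̂)` witnessing `¬φ = ∃x ψ`
    (Inst : Set Sent) (hInstPi : Inst ⊆ Pi m)
    -- if `q` forces `¬φ` then some extension of `q` forces some instance
    (hinst : ∀ q : P, Forces q (neg φ) → ∃ r, r ≤ q ∧ ∃ χ ∈ Inst, Forces r χ)
    -- each instance implies `¬φ`: no condition forcing an instance is
    -- compatible with a condition forcing `φ`
    (hcontra : ∀ (s t : P) (χ : Sent), χ ∈ Inst → Forces s φ → Forces t χ →
      ¬ PCompat s t)
    -- induction hypothesis: `p ⊩ ψ` implies `(p)_m ⊩ ψ` for `Π_m` formulas `ψ`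
    (hIH : ∀ ψ ∈ Pi m, ∀ p : P, Forces p ψ → Forces (res p m) ψ)
    -- `φ` is `Π_{m+1}` and `p` forces `φ`
    (hφ : φ ∈ Pi (m+1)) (p : P) (hp : Forces p φ) :
    Forces (res p (m+1)) φ := by
  by_contra hnot
  obtain ⟨q, hq, hqneg⟩ := hdense _ _ hnot
  obtain ⟨r, hr, χ, hχ, hrχ⟩ := hinst q hqneg
  have h1 : Forces (res r m) χ := hIH χ (hInstPi hχ) r hrχ
  have h2 : PCompat (res r m) p := hrescompat p r (le_trans hr hq)
  exact hcontra p (res r m) χ hχ hp h1 ⟨h2.choose, h2.choose_spec.2, h2.choose_spec.1⟩
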